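/- arXiv:1207.1030 — 10 statements merged into one kernel-verified Lean document; each statement's English description precedes it below -/
import Mathlib

section
/- Let n ≥ 2, let ζ be a vector in Minkowski n-space, and let ḡ be the bilinear form ḡ(x,y) = m(x,y) + m(ζ,x)·m(ζ,y). Then ḡ is degenerate (i.e. there exists a nonzero x with ḡ(x,y) = 0 for all y) if and only if ζ is timelike and unitary, i.e. m(ζ,ζ) = −1. (Paper: Lemma 1, point 1, stated pointwise.) -/
/-- The Minkowski bilinear form on `ℝ × ℝᵏ`:
`m((a,u),(b,v)) = -a·b + ⟨u,v⟩`. -/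
noncomputable def mink {k : ℕ} (x y : ℝ × EuclideanSpace ℝ (Fin k)) : ℝ :=
  -(x.1 * y.1) + (inner ℝ x.2 y.2 : ℝ)

lemma mink_add_smul {k : ℕ} (x z y : ℝ × EuclideanSpace ℝ (Fin k)) (c : ℝ) :
    mink (x + c • z) y = mink x y + c * mink z y := by
  simp only [mink, Prod.fst_add, Prod.snd_add, Prod.smul_fst, Prod.smul_snd,
    inner_add_left, real_inner_smul_left, smul_eq_mul]
  ring

lemma mink_self_eq_zero_iff {k : ℕ} (x : ℝ × EuclideanSpace ℝ (Fin k)) :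
    mink x (-x.1, x.2) = 0 → x = 0 := by
  intro h
  simp only [mink, real_inner_self_eq_norm_sq] at h
  have h1 : x.1 = 0 := by nlinarith [sq_nonneg x.1, sq_nonneg ‖x.2‖]
  have h2 : x.2 = 0 := by
    have : ‖x.2‖ = 0 := by nlinarith [sq_nonneg x.1, sq_nonneg ‖x.2‖]
    exact norm_eq_zero.mp this
  exact Prod.ext h1 h2

/-- Lemma 1, point 1 of the paper (pointwise): the form
`ḡ(x,y) = m(x,y) + m(ζ,x)·m(ζ,y)` on Minkowski `n`-space is degenerate
if and only if `ζ` is timelike and unitary, i.e. `m(ζ,ζ) = -1`. -/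
theorem riggedForm_degenerate_iff_unit_timelike
    (n : ℕ) (hn : 2 ≤ n)
    (ζ : ℝ × EuclideanSpace ℝ (Fin (n - 1)))
    (gbar : (ℝ × EuclideanSpace ℝ (Fin (n - 1))) →
            (ℝ × EuclideanSpace ℝ (Fin (n - 1))) → ℝ)
    (hgbar : ∀ x y, gbar x y = mink x y + mink ζ x * mink ζ y) :
    (∃ x, x ≠ 0 ∧ ∀ y, gbar x y = 0) ↔ mink ζ ζ = -1 := by
  constructor
  · rintro ⟨x, hx, h⟩
    set c : ℝ := mink ζ x with hc
    have key : ∀ y, mink (x + c • ζ) y = 0 := by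
      intro y
      rw [mink_add_smul]
      have := h y
      rw [hgbar] at this
      have hsym : mink ζ y = mink y ζ := by simp [mink, real_inner_comm, mul_comm]
      linarith [this]
    have hz : x + c • ζ = 0 :=
      mink_self_eq_zero_iff _ (key (-(x + c • ζ).1, (x + c • ζ).2))
    have hxc : x = (-c) • ζ := by
      rw [neg_smul]; exact eq_neg_of_add_eq_zero_left hz
    have hcne : c ≠ 0 := by
      intro h0
      apply hx
      rw [hxc, h0, neg_zero, zero_smul]
    have hmul : mink ζ ((-c) • ζ) = -c * mink ζ ζ := by
      simp only [mink, Prod.smul_fst, Prod.smul_snd, real_inner_smul_right, smul_eq_mul]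
      ring
    have hkey : c = -c * mink ζ ζ := by
      calc c = mink ζ x := hc
        _ = mink ζ ((-c) • ζ) := by rw [← hxc]
        _ = -c * mink ζ ζ := hmul
    have h2 : c * (1 + mink ζ ζ) = 0 := by linear_combination hkey
    rcases mul_eq_zero.mp h2 with h3 | h3
    · exact absurd h3 hcne
    · linarith
  · intro hζ
    refine ⟨ζ, ?_, ?_⟩
    · intro h0
      rw [h0] at hζ
      norm_num [mink] at hζ
    · intro y
      rw [hgbar, hζ]
      ring
end

section
/- Let n ≥ 2 and let ζ be a vector in Minkowski n-space with m(ζ,ζ) < −1 (a timelike vector of norm greater than 1). Then the bilinear form ḡ(x,y) = m(x,y) + m(ζ,x)·m(ζ,y) is positive definite. (Paper: remark following Lemma 1, Riemannian case.) -/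
/-- Remark after Lemma 1 of the paper (Riemannian case, pointwise): if `ζ` is a
timelike vector of Minkowski `n`-space with `m(ζ,ζ) < -1`, then the form
`ḡ(x,y) = m(x,y) + m(ζ,x)·m(ζ,y)` is positive definite. -/
theorem riggedForm_posDef_of_norm_gt_one
    (n : ℕ) (hn : 2 ≤ n)
    (ζ : ℝ × EuclideanSpace ℝ (Fin (n - 1)))
    (hζ : mink ζ ζ < -1)
    (gbar : (ℝ × EuclideanSpace ℝ (Fin (n - 1))) →
            (ℝ × EuclideanSpace ℝ (Fin (n - 1))) → ℝ)
    (hgbar : ∀ x y, gbar x y = mink x y + mink ζ x * mink ζ y) :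
    ∀ x, x ≠ 0 → 0 < gbar x x := by
  intro x hx
  rw [hgbar]
  unfold mink at *
  set a := x.1
  set b := ζ.1
  set t : ℝ := inner ℝ ζ.2 x.2
  set W : ℝ := inner ℝ ζ.2 ζ.2
  set U : ℝ := inner ℝ x.2 x.2
  have hCS : t * t ≤ W * U := real_inner_mul_inner_self_le ζ.2 x.2
  have hW : (0:ℝ) ≤ W := real_inner_self_nonneg
  have hU : (0:ℝ) ≤ U := real_inner_self_nonneg
  by_cases h : x.2 = 0
  · have ht : t = 0 := by simp [t, h]
    have hU0 : U = 0 := by simp [U, h]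
    have ha : a ≠ 0 := by
      intro h0
      exact hx (Prod.ext h0 h)
    have ha2 : 0 < a * a := mul_self_pos.2 ha
    rw [ht, hU0]
    nlinarith [mul_pos ha2 (show (0:ℝ) < b*b - 1 by nlinarith)]
  · have hU0 : 0 < U := by
      have : (0:ℝ) < ‖x.2‖ := norm_pos_iff.2 h
      have hUeq : U = ‖x.2‖ * ‖x.2‖ := real_inner_self_eq_norm_mul_norm x.2
      nlinarith
    nlinarith [sq_nonneg ((b*b - 1) * a - b * t),
      mul_pos (show (0:ℝ) < b*b - 1 - W by linarith) hU0, hCS]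
end

section
/- Let n ≥ 2, let H be a degenerate hyperplane in Minkowski n-space, and let ζ be any vector. Then the bilinear form g̃ on H defined by g̃(v,w) = m(v,w) + m(ζ,v)·m(ζ,w) is positive definite if and only if ζ ∉ H. (Paper: Lemma 1, point 2, stated pointwise: the metric induced on a lightlike hypersurface by a rigging is Riemannian.) -/
set_option maxHeartbeats 1000000 in
/-- Lemma 1, point 2 of the paper (pointwise): given a degenerate hyperplane `H`
of Minkowski `n`-space and a vector `ζ`, the form
`g̃(v,w) = m(v,w) + m(ζ,v)·m(ζ,w)` on `H` is positive definite iff `ζ ∉ H`. -/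
theorem riggedForm_posDef_on_degenerate_hyperplane_iff
    (n : ℕ) (hn : 2 ≤ n)
    (H : Submodule ℝ (ℝ × EuclideanSpace ℝ (Fin (n - 1))))
    (hHrank : Module.finrank ℝ H = n - 1)
    (hHdeg : ∃ ξ ∈ H, ξ ≠ 0 ∧ ∀ w ∈ H, mink ξ w = 0)
    (ζ : ℝ × EuclideanSpace ℝ (Fin (n - 1)))
    (gt : (ℝ × EuclideanSpace ℝ (Fin (n - 1))) →
          (ℝ × EuclideanSpace ℝ (Fin (n - 1))) → ℝ)
    (hgt : ∀ v w, gt v w = mink v w + mink ζ v * mink ζ w) :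
    (∀ v ∈ H, v ≠ 0 → 0 < gt v v) ↔ ζ ∉ H := by
  obtain ⟨ξ, hξH, hξ0, hξperp⟩ := hHdeg
  have hnull : mink ξ ξ = 0 := hξperp ξ hξH
  have huu : (inner ℝ ξ.2 ξ.2 : ℝ) = ξ.1 * ξ.1 := by
    simp only [mink] at hnull; linarith
  have ha : ξ.1 ≠ 0 := by
    intro h
    have h2 : (inner ℝ ξ.2 ξ.2 : ℝ) = 0 := by rw [huu, h]; ring
    have hu0 : ξ.2 = 0 := inner_self_eq_zero.mp h2
    exact hξ0 (Prod.ext h hu0)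
  have ha2 : 0 < ξ.1 * ξ.1 := mul_self_pos.mpr ha
  -- the linear functional `mink ξ ·`
  let φ : (ℝ × EuclideanSpace ℝ (Fin (n - 1))) →ₗ[ℝ] ℝ :=
    { toFun := fun w => mink ξ w
      map_add' := by intro x y; simp [mink, inner_add_right]; ring
      map_smul' := by intro c x; simp [mink, inner_smul_right]; ring }
  have hdim : Module.finrank ℝ (ℝ × EuclideanSpace ℝ (Fin (n - 1))) = n := by
    rw [Module.finrank_prod, finrank_euclideanSpace_fin, Module.finrank_self]
    omega
  have hφval : φ (-ξ.1, ξ.2) = 2 * (ξ.1 * ξ.1) := by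
    show mink ξ (-ξ.1, ξ.2) = _
    simp only [mink]
    rw [huu]; ring
  have hφne : φ (-ξ.1, ξ.2) ≠ 0 := by rw [hφval]; positivity
  have hsurj : LinearMap.range φ = ⊤ := by
    rw [LinearMap.range_eq_top]
    intro c
    refine ⟨(c / φ (-ξ.1, ξ.2)) • (-ξ.1, ξ.2), ?_⟩
    rw [map_smul, smul_eq_mul]
    field_simp
  have hker : Module.finrank ℝ (LinearMap.ker φ) = n - 1 := by
    have h := LinearMap.finrank_range_add_finrank_ker φ
    rw [hsurj, finrank_top, Module.finrank_self, hdim] at h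
    omega
  have hHker : H = LinearMap.ker φ := by
    apply Submodule.eq_of_le_of_finrank_eq
    · intro w hw
      exact LinearMap.mem_ker.mpr (hξperp w hw)
    · rw [hHrank, hker]
  have hζiff : ζ ∉ H ↔ mink ξ ζ ≠ 0 := by
    rw [hHker]
    constructor
    · intro h h2; exact h (LinearMap.mem_ker.mpr h2)
    · intro h h2; exact h (LinearMap.mem_ker.mp h2)
  constructor
  · -- positive definite → ζ ∉ H
    intro hpd hζH
    have h1 : mink ζ ξ = 0 := by
      have h2 := hξperp ζ hζH
      simp only [mink] at h2 ⊢
      rw [real_inner_comm]; linarith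
    have h3 := hpd ξ hξH hξ0
    rw [hgt, hnull, h1] at h3
    linarith
  · -- ζ ∉ H → positive definite
    intro hζH v hvH hv0
    have hφv : mink ξ v = 0 := hξperp v hvH
    have huw : (inner ℝ ξ.2 v.2 : ℝ) = ξ.1 * v.1 := by
      simp only [mink] at hφv; linarith
    have hCS : v.1 * v.1 ≤ (inner ℝ v.2 v.2 : ℝ) := by
      have h := real_inner_mul_inner_self_le ξ.2 v.2
      rw [huw, huu] at h
      nlinarith
    have hm : 0 ≤ mink v v := by simp only [mink]; nlinarith
    have hsq : 0 ≤ mink ζ v * mink ζ v := mul_self_nonneg _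
    rw [hgt]
    by_contra hle
    push_neg at hle
    have hmv : mink v v = 0 := by linarith
    have hzv : mink ζ v = 0 := by nlinarith
    -- equality case: v is a multiple of ξ
    have hbb : v.1 * v.1 = (inner ℝ v.2 v.2 : ℝ) := by
      simp only [mink] at hmv; linarith
    have e1 : (inner ℝ v.2 ξ.2 : ℝ) = ξ.1 * v.1 := by rw [real_inner_comm]; exact huw
    set t : ℝ := v.1 / ξ.1 with ht_def
    have hw : v.2 = t • ξ.2 := by
      have hz : (inner ℝ (v.2 - t • ξ.2) (v.2 - t • ξ.2) : ℝ) = 0 := by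
        rw [inner_sub_left, inner_sub_right, inner_sub_right, real_inner_smul_left,
          real_inner_smul_left, real_inner_smul_right, real_inner_smul_right,
          e1, huw, huu, ← hbb, ht_def]
        field_simp
        ring
      exact sub_eq_zero.mp (inner_self_eq_zero.mp hz)
    have hveq : v = t • ξ := by
      apply Prod.ext
      · show v.1 = (t • ξ).1
        rw [Prod.smul_fst, smul_eq_mul, ht_def]
        field_simp
      · show v.2 = (t • ξ).2
        rw [Prod.smul_snd]
        exact hw
    have ht : t ≠ 0 := by
      intro h; rw [h, zero_smul] at hveq; exact hv0 hveq
    have hzξ : mink ζ ξ = 0 := by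
      have hlin : mink ζ v = t * mink ζ ξ := by
        rw [hveq]
        simp only [mink, Prod.smul_fst, Prod.smul_snd, inner_smul_right, smul_eq_mul]
        ring
      rw [hlin] at hzv
      rcases mul_eq_zero.mp hzv with h | h
      · exact absurd h ht
      · exact h
    apply hζiff.mp hζH
    simp only [mink] at hzξ ⊢
    rw [real_inner_comm]; linarith
end

section
/- Let n ≥ 2, let H be a degenerate hyperplane in Minkowski n-space, and let ζ be a vector with ζ ∉ H. Then there exists a unique lightlike vector ξ ∈ H such that m(ζ,ξ) = 1. Moreover this ξ is g̃-metrically equivalent to the restriction of m(ζ,·) to H, i.e. g̃(ξ,v) = m(ζ,v) for all v ∈ H, and ξ is g̃-unitary: g̃(ξ,ξ) = 1. (Paper: Lemma characterizing the rigged vector field, stated pointwise.) -/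
lemma mink_comm {k : ℕ} (x y : ℝ × EuclideanSpace ℝ (Fin k)) : mink x y = mink y x := by
  simp [mink, real_inner_comm, mul_comm]

lemma mink_smul_right {k : ℕ} (c : ℝ) (x y : ℝ × EuclideanSpace ℝ (Fin k)) :
    mink x (c • y) = c * mink x y := by
  simp only [mink, Prod.smul_fst, Prod.smul_snd, smul_eq_mul, real_inner_smul_right]; ring

lemma mink_smul_left {k : ℕ} (c : ℝ) (x y : ℝ × EuclideanSpace ℝ (Fin k)) :
    mink (c • x) y = c * mink x y := by
  simp only [mink, Prod.smul_fst, Prod.smul_snd, smul_eq_mul, real_inner_smul_left]; ring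

lemma mink_add_right {k : ℕ} (x y z : ℝ × EuclideanSpace ℝ (Fin k)) :
    mink x (y + z) = mink x y + mink x z := by
  simp [mink, inner_add_right]; ring

/-- Cauchy–Schwarz equality: a lightlike vector `(b,v)` orthogonal to a lightlike
`(a,u)` (with `a ≠ 0`) is a multiple of it. -/
lemma key_multiple {k : ℕ} (a b : ℝ) (u v : EuclideanSpace ℝ (Fin k)) (ha : a ≠ 0)
    (huu : (inner ℝ u u : ℝ) = a * a) (huv : (inner ℝ u v : ℝ) = a * b)
    (hvv : (inner ℝ v v : ℝ) = b * b) :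
    ((b, v) : ℝ × EuclideanSpace ℝ (Fin k)) = (b / a) • ((a, u) : ℝ × EuclideanSpace ℝ (Fin k)) := by
  have hvu : (inner ℝ v u : ℝ) = a * b := by rw [real_inner_comm]; exact huv
  have h0 : (inner ℝ (v - (b / a) • u) (v - (b / a) • u) : ℝ) = 0 := by
    simp only [inner_sub_left, inner_sub_right, real_inner_smul_left, real_inner_smul_right,
      huu, huv, hvv, hvu]
    field_simp
    ring
  have hv : v - (b / a) • u = 0 := inner_self_eq_zero.mp h0
  have hv' : v = (b / a) • u := by rwa [sub_eq_zero] at hv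
  have hb : b = (b / a) * a := by field_simp
  refine Prod.ext ?_ ?_
  · simpa using hb
  · simpa using hv'

/-- Lemma `lemacaractproyeccion` of the paper (pointwise): given a degenerate
hyperplane `H` of Minkowski `n`-space and a rigging vector `ζ ∉ H`, there is a
unique lightlike vector `ξ ∈ H` with `m(ζ,ξ) = 1`; moreover this `ξ` is
`g̃`-metrically equivalent to `m(ζ,·)|_H` and is `g̃`-unitary. -/
theorem rigged_vector_exists_unique
    (n : ℕ) (hn : 2 ≤ n)
    (H : Submodule ℝ (ℝ × EuclideanSpace ℝ (Fin (n - 1))))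
    (hHrank : Module.finrank ℝ H = n - 1)
    (hHdeg : ∃ ξ ∈ H, ξ ≠ 0 ∧ ∀ w ∈ H, mink ξ w = 0)
    (ζ : ℝ × EuclideanSpace ℝ (Fin (n - 1))) (hζ : ζ ∉ H)
    (gt : (ℝ × EuclideanSpace ℝ (Fin (n - 1))) →
          (ℝ × EuclideanSpace ℝ (Fin (n - 1))) → ℝ)
    (hgt : ∀ v w, gt v w = mink v w + mink ζ v * mink ζ w) :
    (∃! ξ, ξ ∈ H ∧ mink ξ ξ = 0 ∧ mink ζ ξ = 1) ∧
    (∀ ξ, ξ ∈ H → mink ξ ξ = 0 → mink ζ ξ = 1 →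
      (∀ v ∈ H, gt ξ v = mink ζ v) ∧ gt ξ ξ = 1) := by
  obtain ⟨ξ₀, hξ₀H, hξ₀ne, hξ₀orth⟩ := hHdeg
  have h00 : mink ξ₀ ξ₀ = 0 := hξ₀orth ξ₀ hξ₀H
  have huu : (inner ℝ ξ₀.2 ξ₀.2 : ℝ) = ξ₀.1 * ξ₀.1 := by
    unfold mink at h00; linarith
  have ha : ξ₀.1 ≠ 0 := by
    intro h
    apply hξ₀ne
    have h2 : (inner ℝ ξ₀.2 ξ₀.2 : ℝ) = 0 := by rw [huu, h]; ring
    have h3 : ξ₀.2 = 0 := inner_self_eq_zero.mp h2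
    exact Prod.ext h h3
  -- any lightlike vector of H is a multiple of ξ₀
  have key : ∀ w ∈ H, mink w w = 0 → w = (w.1 / ξ₀.1) • ξ₀ := by
    intro w hw hw0
    have horth := hξ₀orth w hw
    have huv : (inner ℝ ξ₀.2 w.2 : ℝ) = ξ₀.1 * w.1 := by
      unfold mink at horth; linarith
    have hvv : (inner ℝ w.2 w.2 : ℝ) = w.1 * w.1 := by
      unfold mink at hw0; linarith
    have := key_multiple ξ₀.1 w.1 ξ₀.2 w.2 ha huu huv hvv
    simpa using this
  -- m(ζ, ξ₀) ≠ 0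
  have hs : mink ζ ξ₀ ≠ 0 := by
    intro hs0
    have hfin : Module.finrank ℝ (ℝ × EuclideanSpace ℝ (Fin (n - 1))) = n := by
      rw [Module.finrank_prod, finrank_euclideanSpace, Fintype.card_fin,
        Module.finrank_self]
      omega
    have hζsup : ζ ∈ H ⊔ Submodule.span ℝ {ζ} :=
      Submodule.mem_sup_right (Submodule.mem_span_singleton_self ζ)
    have hlt : H < H ⊔ Submodule.span ℝ {ζ} :=
      lt_of_le_of_ne le_sup_left (fun h => hζ (h ▸ hζsup))
    have hlt' : Module.finrank ℝ ↥H < Module.finrank ℝ ↥(H ⊔ Submodule.span ℝ {ζ}) :=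
      Submodule.finrank_lt_finrank_of_lt hlt
    have hle : Module.finrank ℝ ↥(H ⊔ Submodule.span ℝ {ζ})
        ≤ Module.finrank ℝ (ℝ × EuclideanSpace ℝ (Fin (n - 1))) :=
      Submodule.finrank_le _
    have hK : H ⊔ Submodule.span ℝ {ζ} = ⊤ := by
      apply Submodule.eq_top_of_finrank_eq
      omega
    have hall : ∀ x, mink ξ₀ x = 0 := by
      intro x
      have hx : x ∈ H ⊔ Submodule.span ℝ {ζ} := by rw [hK]; trivial
      obtain ⟨h, hh, z, hz, rfl⟩ := Submodule.mem_sup.mp hx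
      obtain ⟨c, rfl⟩ := Submodule.mem_span_singleton.mp hz
      rw [mink_add_right, mink_smul_right, hξ₀orth h hh, mink_comm ξ₀ ζ, hs0]
      ring
    have := hall (-ξ₀.1, ξ₀.2)
    unfold mink at this
    simp only at this
    rw [huu] at this
    exact ha (mul_self_eq_zero.mp (by linarith))
  set s := mink ζ ξ₀ with hsdef
  set ξ : ℝ × EuclideanSpace ℝ (Fin (n - 1)) := s⁻¹ • ξ₀ with hξdef
  have hξH : ξ ∈ H := Submodule.smul_mem H _ hξ₀H
  have hξ0 : mink ξ ξ = 0 := by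
    rw [hξdef, mink_smul_left, mink_smul_right, h00]; ring
  have hξ1 : mink ζ ξ = 1 := by
    rw [hξdef, mink_smul_right, ← hsdef, inv_mul_cancel₀ hs]
  have huniq : ∀ y, y ∈ H ∧ mink y y = 0 ∧ mink ζ y = 1 → y = ξ := by
    rintro y ⟨hyH, hy0, hy1⟩
    have hy := key y hyH hy0
    have h1 : (y.1 / ξ₀.1) * s = 1 := by
      rw [← mink_smul_right, ← hy]; exact hy1
    have hc : y.1 / ξ₀.1 = s⁻¹ := eq_inv_of_mul_eq_one_left h1
    rw [hy, hc, hξdef]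
  constructor
  · exact ⟨ξ, ⟨hξH, hξ0, hξ1⟩, huniq⟩
  · intro ξ' hξ'H hξ'0 hξ'1
    have hmult := key ξ' hξ'H hξ'0
    have horthH : ∀ v ∈ H, mink ξ' v = 0 := by
      intro v hv
      rw [hmult, mink_smul_left, hξ₀orth v hv, mul_zero]
    constructor
    · intro v hv
      rw [hgt, horthH v hv, hξ'1]; ring
    · rw [hgt, horthH ξ' hξ'H, hξ'1]; ring
end

section
/- Let E be a nontrivial real Hilbert space, Ω ⊆ E open, h : Ω → ℝ differentiable at x ∈ Ω, and f : ℝ → ℝ with f(h(x)) > 0. Define the symmetric bilinear form B_x on E by B_x(v,w) = f(h(x))²·⟨v,w⟩ − (dh_x v)·(dh_x w), where dh_x is the Fréchet derivative of h at x. Then B_x is degenerate (there exists v ≠ 0 with B_x(v,w) = 0 for all w) if and only if ‖∇h(x)‖ = f(h(x)); and in that case the radical of B_x is spanned by the gradient ∇h(x). (Paper: Lemma 'lemahyperluzGRW' — the graph of h is a lightlike hypersurface of the GRW space I ×_f F iff |∇^F h|_F = f∘h — stated pointwise for a Euclidean/Hilbert fibre; B_x is the first fundamental form of the graph of h in the warped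 metric −dt² + f(t)²⟨·,·⟩, identifying the tangent space of the graph at (h(x),x) with E via v ↦ (dh_x v, v).) -/
/-- Lemma `lemahyperluzGRW` of the paper, stated pointwise for a Hilbert fibre:
the first fundamental form `B_x(v,w) = f(h(x))²⟨v,w⟩ − dh_x(v)·dh_x(w)` of the
graph of `h` in the warped metric `−dt² + f(t)²⟨·,·⟩` is degenerate at `x`
iff `‖∇h(x)‖ = f(h(x))`, and in that case its radical is spanned by `∇h(x)`. -/
theorem graph_lightlike_iff_eikonal
    {E : Type*} [NormedAddCommGroup E] [InnerProductSpace ℝ E]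
    [CompleteSpace E] [Nontrivial E]
    {Ω : Set E} (hΩ : IsOpen Ω) {x : E} (hx : x ∈ Ω)
    {h : E → ℝ} (hdiff : DifferentiableAt ℝ h x)
    (f : ℝ → ℝ) (hf : 0 < f (h x))
    (B : E → E → ℝ)
    (hB : ∀ v w, B v w =
      (f (h x)) ^ 2 * (inner ℝ v w : ℝ) - (fderiv ℝ h x v) * (fderiv ℝ h x w)) :
    ((∃ v, v ≠ 0 ∧ ∀ w, B v w = 0) ↔ ‖gradient h x‖ = f (h x)) ∧
    (‖gradient h x‖ = f (h x) →
      ∀ v, (∀ w, B v w = 0) ↔ ∃ c : ℝ, v = c • gradient h x) := by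
  set g := gradient h x with hg
  set c0 := f (h x) with hc0
  have hfd : ∀ v, fderiv ℝ h x v = (inner ℝ g v : ℝ) := by
    intro v
    rw [hg, gradient]
    exact (InnerProductSpace.toDual_symm_apply).symm
  have hB' : ∀ v w, B v w = (inner ℝ (c0 ^ 2 • v - (inner ℝ g v : ℝ) • g) w : ℝ) := by
    intro v w
    rw [hB, hfd, hfd, inner_sub_left, real_inner_smul_left, real_inner_smul_left]
  have hrad : ∀ v, (∀ w, B v w = 0) ↔ c0 ^ 2 • v = (inner ℝ g v : ℝ) • g := by
    intro v
    constructor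
    · intro hv
      have := hv (c0 ^ 2 • v - (inner ℝ g v : ℝ) • g)
      rw [hB'] at this
      exact sub_eq_zero.mp (inner_self_eq_zero.mp this)
    · intro hv w
      rw [hB', sub_eq_zero.mpr hv, inner_zero_left]
  have hc2 : (0:ℝ) < c0 ^ 2 := by positivity
  constructor
  · constructor
    · rintro ⟨v, hv0, hv⟩
      have hveq : c0 ^ 2 • v = (inner ℝ g v : ℝ) • g := (hrad v).mp hv
      have hgv : (inner ℝ g v : ℝ) ≠ 0 := by
        intro hz
        rw [hz, zero_smul] at hveq
        rcases smul_eq_zero.mp hveq with hcz | hvz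
        · exact (ne_of_gt hc2) hcz
        · exact hv0 hvz
      have heq : c0 ^ 2 * (inner ℝ g v : ℝ) = (inner ℝ g v : ℝ) * ‖g‖ ^ 2 := by
        have : (inner ℝ g (c0 ^ 2 • v) : ℝ) = (inner ℝ g ((inner ℝ g v : ℝ) • g) : ℝ) := by
          rw [hveq]
        rwa [real_inner_smul_right, real_inner_smul_right,
          real_inner_self_eq_norm_sq] at this
      have hnorm : ‖g‖ ^ 2 = c0 ^ 2 := by
        have := mul_right_cancel₀ hgv (by linarith : ‖g‖ ^ 2 * (inner ℝ g v : ℝ) = c0 ^ 2 * (inner ℝ g v : ℝ))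
        exact this
      nlinarith [norm_nonneg g, hf]
    · intro hn
      refine ⟨g, ?_, (hrad g).mpr ?_⟩
      · intro h0
        rw [h0, norm_zero] at hn
        linarith
      · rw [real_inner_self_eq_norm_sq, hn]
  · intro hn v
    rw [hrad v]
    constructor
    · intro hv
      refine ⟨(inner ℝ g v : ℝ) / c0 ^ 2, ?_⟩
      have : c0 ^ 2 • v = c0 ^ 2 • (((inner ℝ g v : ℝ) / c0 ^ 2) • g) := by
        rw [smul_smul, hv]
        congr 1
        field_simp
      exact smul_right_injective E (ne_of_gt hc2) this
    · rintro ⟨c, rfl⟩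
      rw [real_inner_smul_right, real_inner_self_eq_norm_sq, hn, smul_smul]
      ring_nf
end

section
/- Let E be a real Hilbert space, Ω ⊆ E open, h : Ω → ℝ twice continuously differentiable, and f : ℝ → ℝ differentiable. Assume the eikonal-type identity ‖∇h(x)‖² = f(h(x))² for all x ∈ Ω. Then for every x ∈ Ω the derivative of the gradient field in its own direction satisfies D(∇h)(x)(∇h(x)) = f(h(x))·f′(h(x))·∇h(x), where D(∇h)(x) denotes the Fréchet derivative at x of the map y ↦ ∇h(y). (Paper: Formula (remarkh): ∇^F_{∇^F h} ∇^F h = (f∘h)(f′∘h)∇^F h for any function whose graph is a lightlike hypersurface of I ×_f F, stated for a Euclidean/Hilbert fibre.) -/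
open InnerProductSpace

/-- Formula `(remarkh)` of the paper, for a Hilbert fibre: if `‖∇h‖² = (f∘h)²`
on an open set `Ω` (so that the graph of `h` is a lightlike hypersurface of the
GRW space `I ×_f E`), then `∇_{∇h} ∇h = (f∘h)(f′∘h) ∇h` on `Ω`. -/
theorem grad_selfDeriv_of_eikonal
    {E : Type*} [NormedAddCommGroup E] [InnerProductSpace ℝ E] [CompleteSpace E]
    {Ω : Set E} (hΩ : IsOpen Ω)
    {h : E → ℝ} (hh : ContDiffOn ℝ 2 h Ω)
    {f : ℝ → ℝ} (hf : Differentiable ℝ f)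
    (heik : ∀ x ∈ Ω, ‖gradient h x‖ ^ 2 = (f (h x)) ^ 2) :
    ∀ x ∈ Ω, fderiv ℝ (gradient h) x (gradient h x)
      = (f (h x) * deriv f (h x)) • gradient h x := by
  intro x hx
  have hxn : Ω ∈ nhds x := hΩ.mem_nhds hx
  have hx2 : ContDiffAt ℝ 2 h x := hh.contDiffAt hxn
  -- differentiability of h and of fderiv h at x
  have hdh : DifferentiableAt ℝ h x := hx2.differentiableAt (by norm_num)
  have hfd : DifferentiableAt ℝ (fderiv ℝ h) x :=
    (hx2.fderiv_right (m := 1) (by norm_num)).differentiableAt (by norm_num)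
  -- the derivative of the gradient field
  set B := fderiv ℝ (gradient h) x with hB
  have hGfun : gradient h = fun y => (toDual ℝ E).symm (fderiv ℝ h y) := rfl
  have hGder : HasFDerivAt (gradient h)
      (((toDual ℝ E).symm.toContinuousLinearEquiv.toContinuousLinearMap).comp
        (fderiv ℝ (fderiv ℝ h) x)) x := by
    rw [hGfun]
    exact (((toDual ℝ E).symm.toContinuousLinearEquiv.toContinuousLinearMap).hasFDerivAt).comp
      x hfd.hasFDerivAt
  have hBeq : B = ((toDual ℝ E).symm.toContinuousLinearEquiv.toContinuousLinearMap).comp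
      (fderiv ℝ (fderiv ℝ h) x) := hGder.fderiv
  -- inner product of B v with w equals the second derivative
  have hinner : ∀ v w : E, ⟪B v, w⟫_ℝ = fderiv ℝ (fderiv ℝ h) x v w := by
    intro v w
    rw [hBeq]
    simp [toDual_symm_apply]
  -- symmetry of the second derivative
  have hsymm : ∀ v w : E, ⟪B v, w⟫_ℝ = ⟪B w, v⟫_ℝ := by
    intro v w
    rw [hinner, hinner]
    exact hx2.isSymmSndFDerivAt (by simp) v w
  -- fderiv of h is pairing with gradient
  have hpair : ∀ w : E, fderiv ℝ h x w = ⟪gradient h x, w⟫_ℝ := by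
    intro w
    rw [← toDual_apply_apply (𝕜 := ℝ)]
    simp [gradient]
  -- the two sides of the eikonal identity, as functions
  have hG : HasFDerivAt (gradient h) B x := hB ▸ hGder.fderiv ▸ hGder
  have h1 : HasFDerivAt (fun y => ⟪gradient h y, gradient h y⟫_ℝ)
      ((fderivInnerCLM ℝ (gradient h x, gradient h x)).comp (B.prod B)) x :=
    hG.inner ℝ hG
  have hfc : HasDerivAt f (deriv f (h x)) (h x) := (hf (h x)).hasDerivAt
  have h2 : HasFDerivAt (fun y => f (h y) * f (h y))
      ((f (h x) * deriv f (h x) + deriv f (h x) * f (h x)) • fderiv ℝ h x) x := by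
    have hc : HasFDerivAt (fun y => f (h y)) (deriv f (h x) • fderiv ℝ h x) x :=
      hfc.comp_hasFDerivAt x hdh.hasFDerivAt
    have := hc.mul hc
    refine this.congr_fderiv ?_
    ext w
    simp
    ring
  -- the two functions agree near x, so derivatives agree
  have heq : (fun y => ⟪gradient h y, gradient h y⟫_ℝ) =ᶠ[nhds x]
      (fun y => f (h y) * f (h y)) := by
    filter_upwards [hxn] with y hy
    rw [real_inner_self_eq_norm_sq, heik y hy]
    ring
  have hder_eq : ((fderivInnerCLM ℝ (gradient h x, gradient h x)).comp (B.prod B) :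
      E →L[ℝ] ℝ) = (f (h x) * deriv f (h x) + deriv f (h x) * f (h x)) • fderiv ℝ h x := by
    have e1 := h1.fderiv
    have e2 := h2.fderiv
    rw [← e1, ← e2]
    exact Filter.EventuallyEq.fderiv_eq heq
  -- deduce the key scalar identity
  have key : ∀ w : E, ⟪B w, gradient h x⟫_ℝ
      = (f (h x) * deriv f (h x)) * ⟪gradient h x, w⟫_ℝ := by
    intro w
    have := congrFun (congrArg DFunLike.coe hder_eq) w
    simp only [ContinuousLinearMap.comp_apply, ContinuousLinearMap.prod_apply,
      fderivInnerCLM_apply, ContinuousLinearMap.smul_apply, smul_eq_mul] at this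
    rw [hpair w] at this
    linarith [this, real_inner_comm (B w) (gradient h x)]
  -- conclude by nondegeneracy of the inner product
  apply ext_inner_right ℝ
  intro w
  rw [hsymm, key w, real_inner_smul_left]
end

section
/- Let E be a real Hilbert space of dimension ≥ 2, x₀ ∈ E, I ⊆ ℝ an interval, f : I → ℝ continuously differentiable and positive, t* ∈ I, and Ω ⊆ E ∖ {x₀} open. Suppose h : Ω → ℝ is differentiable and satisfies ∫_{t*}^{h(x)} (1/f(r)) dr = ‖x − x₀‖ for every x ∈ Ω. Then for every x ∈ Ω: (i) ∇h(x) = (f(h(x))/‖x − x₀‖)·(x − x₀), so in particular ‖∇h(x)‖ = f(h(x)); and (ii) for every v ∈ E with ⟨v, x − x₀⟩ = 0, D(∇h)(x)(v) = (f(h(x))/‖x − x₀‖)·v, where D(∇h)(x) is the Fréchet derivative at x of y ↦ ∇h(y). (Paper: the graph description of the local lightcone in a GRW space with flat fibre — Proposition 'conoGRW' — together with the flat case of Proposition 'conosumbilicos': the shape operator of the screen is proportional to the identity, so lightcones of Robertson–Walker spaces are totally umbilic.) -/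
open InnerProductSpace

private lemma hasFDerivAt_norm_sub' {E : Type*} [NormedAddCommGroup E] [InnerProductSpace ℝ E]
    (x₀ x : E) (hx : x ≠ x₀) :
    HasFDerivAt (fun y => ‖y - x₀‖) ((‖x - x₀‖)⁻¹ • innerSL ℝ (x - x₀)) x := by
  have hr : (0:ℝ) < ‖x - x₀‖ := by
    rw [norm_sub_pos_iff]; exact hx
  have hq : HasFDerivAt (fun y : E => y - x₀) (ContinuousLinearMap.id ℝ E) x :=
    (hasFDerivAt_id x).sub_const x₀
  have hq2 := hq.norm_sq
  have hsq : HasDerivAt Real.sqrt (1 / (2 * ‖x - x₀‖)) (‖x - x₀‖ ^ 2) := by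
    have := Real.hasDerivAt_sqrt (x := ‖x - x₀‖ ^ 2) (by positivity)
    rwa [Real.sqrt_sq (norm_nonneg _)] at this
  have hcomp := hsq.comp_hasFDerivAt x hq2
  have heq : (Real.sqrt ∘ fun y : E => ‖y - x₀‖ ^ 2) = fun y => ‖y - x₀‖ := by
    funext y; simp [Function.comp, Real.sqrt_sq (norm_nonneg _)]
  rw [heq] at hcomp
  have hEq : ((1 / (2 * ‖x - x₀‖)) • 2 • ((innerSL ℝ) (x - x₀)).comp (ContinuousLinearMap.id ℝ E))
      = (‖x - x₀‖)⁻¹ • innerSL ℝ (x - x₀) := by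
    ext v
    have h2 : ((1 / (2 * ‖x - x₀‖)) • 2 • ((innerSL ℝ) (x - x₀)).comp (ContinuousLinearMap.id ℝ E)) v
        = (1 / (2 * ‖x - x₀‖)) * (2 * (inner ℝ (x - x₀) v : ℝ)) := by
      simp [two_smul, inner_sub_left]; ring
    rw [h2]
    simp only [ContinuousLinearMap.smul_apply, innerSL_apply_apply, smul_eq_mul]
    field_simp
  rw [hEq] at hcomp
  exact hcomp

private lemma lightcone_aux
    {E : Type*} [NormedAddCommGroup E] [InnerProductSpace ℝ E] [CompleteSpace E]
    (x₀ : E) (I : Set ℝ) (hI : I.OrdConnected)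
    (f : ℝ → ℝ) (hf : ContDiffOn ℝ 1 f I) (hfpos : ∀ t ∈ I, 0 < f t)
    (tstar : ℝ) (htstar : tstar ∈ I)
    (Ω : Set E) (hΩ : IsOpen Ω) (hΩsub : ∀ x ∈ Ω, x ≠ x₀)
    (h : E → ℝ) (hdiff : DifferentiableOn ℝ h Ω)
    (hmem : ∀ x ∈ Ω, h x ∈ I)
    (hcone : ∀ x ∈ Ω, (∫ r in tstar..(h x), 1 / f r) = ‖x - x₀‖) :
    ∀ x ∈ Ω, h x ∈ interior I ∧
      HasGradientAt h ((f (h x) / ‖x - x₀‖) • (x - x₀)) x := by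
  have hcontf : ContinuousOn (fun r => 1 / f r) I :=
    continuousOn_const.div hf.continuousOn (fun t ht => (hfpos t ht).ne')
  have hint : ∀ a ∈ I, ∀ b ∈ I, IntervalIntegrable (fun r => 1 / f r) MeasureTheory.volume a b :=
    fun a ha b hb => (hcontf.mono (Set.OrdConnected.uIcc_subset hI ha hb)).intervalIntegrable
  set F : ℝ → ℝ := fun t => ∫ r in tstar..t, 1 / f r with hFdef
  have hmono : StrictMonoOn F I := by
    intro a ha b hb hab
    have h1 : F b - F a = ∫ r in a..b, 1 / f r :=
      intervalIntegral.integral_interval_sub_left (hint tstar htstar b hb) (hint tstar htstar a ha)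
    have h2 : 0 < ∫ r in a..b, 1 / f r := by
      apply intervalIntegral.intervalIntegral_pos_of_pos_on (hint a ha b hb) _ hab
      intro t ht
      have htI : t ∈ I := hI.out ha hb ⟨ht.1.le, ht.2.le⟩
      have := hfpos t htI
      positivity
    have : F a < F b := by linarith
    exact this
  intro x hx
  have hx0 : x ≠ x₀ := hΩsub x hx
  have hrpos : 0 < ‖x - x₀‖ := by rw [norm_sub_pos_iff]; exact hx0
  set r := ‖x - x₀‖ with hrdef
  obtain ⟨ε, hε, hball⟩ := Metric.isOpen_iff.mp hΩ x hx
  set δ := min (ε / 2) (r / 2) with hδdef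
  have hδpos : 0 < δ := lt_min (by linarith) (by linarith)
  have hδε : δ < ε := lt_of_le_of_lt (min_le_left _ _) (by linarith)
  have hδr : δ < r := lt_of_le_of_lt (min_le_right _ _) (by linarith)
  have hmemball : ∀ c : ℝ, |c| = δ / r → x + c • (x - x₀) ∈ Ω := by
    intro c hc
    apply hball
    rw [Metric.mem_ball, dist_eq_norm]
    have h1 : x + c • (x - x₀) - x = c • (x - x₀) := by abel
    rw [h1, norm_smul, Real.norm_eq_abs, hc, ← hrdef, div_mul_cancel₀ _ hrpos.ne']
    exact hδε
  have hnorm_c : ∀ c : ℝ, -1 < c → ‖x + c • (x - x₀) - x₀‖ = (1 + c) * r := by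
    intro c hc
    have h1 : x + c • (x - x₀) - x₀ = (1 + c) • (x - x₀) := by
      rw [add_smul, one_smul]; abel
    rw [h1, norm_smul, Real.norm_eq_abs, abs_of_pos (by linarith), ← hrdef]
  -- the two comparison points
  have hcr : |δ / r| = δ / r := abs_of_pos (div_pos hδpos hrpos)
  have hcr' : |-(δ / r)| = δ / r := by rw [abs_neg]; exact hcr
  set yp := x + (δ / r) • (x - x₀) with hypdef
  set ym := x + (-(δ / r)) • (x - x₀) with hymdef
  have hypΩ : yp ∈ Ω := hmemball _ hcr
  have hymΩ : ym ∈ Ω := hmemball _ hcr'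
  have hdivr : 0 < δ / r := div_pos hδpos hrpos
  have hdivr1 : δ / r < 1 := (div_lt_one hrpos).mpr hδr
  have hypnorm : ‖yp - x₀‖ = r + δ := by
    rw [hnorm_c _ (by linarith)]
    field_simp
  have hymnorm : ‖ym - x₀‖ = r - δ := by
    rw [hnorm_c _ (by linarith)]
    field_simp
    ring
  have hFyp : F (h yp) = r + δ := (hcone yp hypΩ).trans hypnorm
  have hFym : F (h ym) = r - δ := (hcone ym hymΩ).trans hymnorm
  have hFx : F (h x) = r := hcone x hx
  have hlt1 : h ym < h x := by
    by_contra hle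
    push_neg at hle
    have := hmono.monotoneOn (hmem x hx) (hmem ym hymΩ) hle
    rw [hFx, hFym] at this
    linarith
  have hlt2 : h x < h yp := by
    by_contra hle
    push_neg at hle
    have := hmono.monotoneOn (hmem yp hypΩ) (hmem x hx) hle
    rw [hFx, hFyp] at this
    linarith
  have hIoo : Set.Ioo (h ym) (h yp) ⊆ I := fun t ht =>
    hI.out (hmem ym hymΩ) (hmem yp hypΩ) ⟨ht.1.le, ht.2.le⟩
  have hInt : h x ∈ interior I := interior_maximal hIoo isOpen_Ioo ⟨hlt1, hlt2⟩
  refine ⟨hInt, ?_⟩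
  have hInhds : I ∈ nhds (h x) := mem_nhds_iff.mpr ⟨interior I, interior_subset, isOpen_interior, hInt⟩
  -- FTC
  have hmeas : StronglyMeasurableAtFilter (fun r => 1 / f r) (nhds (h x))
      MeasureTheory.volume :=
    ContinuousOn.stronglyMeasurableAtFilter isOpen_interior
      (hcontf.mono interior_subset) _ hInt
  have hF' : HasDerivAt F (1 / f (h x)) (h x) :=
    intervalIntegral.integral_hasDerivAt_right (hint tstar htstar (h x) (hmem x hx)) hmeas
      (hcontf.continuousAt hInhds)
  have hh : HasFDerivAt h (fderiv ℝ h x) x :=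
    (hdiff.differentiableAt (hΩ.mem_nhds hx)).hasFDerivAt
  have hcompose : HasFDerivAt (F ∘ h) ((1 / f (h x)) • fderiv ℝ h x) x :=
    hF'.comp_hasFDerivAt x hh
  have hEvt : (fun y => ‖y - x₀‖) =ᶠ[nhds x] (F ∘ h) := by
    filter_upwards [hΩ.mem_nhds hx] with y hy
    exact (hcone y hy).symm
  have hnormF := hasFDerivAt_norm_sub' x₀ x hx0
  have huniq : (1 / f (h x)) • fderiv ℝ h x = r⁻¹ • innerSL ℝ (x - x₀) :=
    (hcompose.congr_of_eventuallyEq hEvt).unique hnormF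
  have hfne : f (h x) ≠ 0 := (hfpos _ (hmem x hx)).ne'
  have hfder : fderiv ℝ h x = (f (h x) / r) • innerSL ℝ (x - x₀) := by
    have h1 : fderiv ℝ h x = f (h x) • ((1 / f (h x)) • fderiv ℝ h x) := by
      rw [smul_smul, mul_one_div, div_self hfne, one_smul]
    rw [h1, huniq, smul_smul, div_eq_mul_inv]
  rw [hasGradientAt_iff_hasFDerivAt]
  have htd : (InnerProductSpace.toDual ℝ E) ((f (h x) / r) • (x - x₀))
      = (f (h x) / r) • innerSL ℝ (x - x₀) := by
    ext v
    simp [InnerProductSpace.toDual_apply_apply, inner_smul_left]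
  rw [htd, ← hfder]
  exact hh

/-- Propositions `conoGRW` and `conosumbilicos` of the paper for a flat Hilbert
fibre: if the graph of `h` is the lightcone hypersurface, i.e.
`∫_{t*}^{h(x)} dr/f(r) = ‖x − x₀‖`, then `∇h(x) = (f(h(x))/‖x−x₀‖)(x−x₀)`
(so the graph is lightlike), and the derivative of `∇h` in screen directions
is `(f(h(x))/‖x−x₀‖)·id`, i.e. the lightcone is totally umbilic. -/
theorem lightcone_graph_gradient_and_umbilic
    {E : Type*} [NormedAddCommGroup E] [InnerProductSpace ℝ E] [CompleteSpace E]
    (hdim : 2 ≤ Module.rank ℝ E)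
    (x₀ : E) (I : Set ℝ) (hI : I.OrdConnected)
    (f : ℝ → ℝ) (hf : ContDiffOn ℝ 1 f I) (hfpos : ∀ t ∈ I, 0 < f t)
    (tstar : ℝ) (htstar : tstar ∈ I)
    (Ω : Set E) (hΩ : IsOpen Ω) (hΩsub : ∀ x ∈ Ω, x ≠ x₀)
    (h : E → ℝ) (hdiff : DifferentiableOn ℝ h Ω)
    (hmem : ∀ x ∈ Ω, h x ∈ I)
    (hcone : ∀ x ∈ Ω, (∫ r in tstar..(h x), 1 / f r) = ‖x - x₀‖) :
    ∀ x ∈ Ω,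
      gradient h x = (f (h x) / ‖x - x₀‖) • (x - x₀) ∧
      ∀ v : E, (inner ℝ v (x - x₀) : ℝ) = 0 →
        fderiv ℝ (gradient h) x v = (f (h x) / ‖x - x₀‖) • v := by
  intro x hx
  obtain ⟨hInt, hgrad⟩ :=
    lightcone_aux x₀ I hI f hf hfpos tstar htstar Ω hΩ hΩsub h hdiff hmem hcone x hx
  have hx0 : x ≠ x₀ := hΩsub x hx
  have hrpos : 0 < ‖x - x₀‖ := by rw [norm_sub_pos_iff]; exact hx0
  refine ⟨hgrad.gradient, ?_⟩
  intro v hv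
  have hvx : (inner ℝ (x - x₀) v : ℝ) = 0 := by rw [real_inner_comm]; exact hv
  set r := ‖x - x₀‖ with hrdef
  have hEvt : gradient h =ᶠ[nhds x] (fun y => (f (h y) * (‖y - x₀‖)⁻¹) • (y - x₀)) := by
    filter_upwards [hΩ.mem_nhds hx] with y hy
    rw [(lightcone_aux x₀ I hI f hf hfpos tstar htstar Ω hΩ hΩsub h hdiff hmem
      hcone y hy).2.gradient, div_eq_mul_inv]
  have hInhds : I ∈ nhds (h x) :=
    mem_nhds_iff.mpr ⟨interior I, interior_subset, isOpen_interior, hInt⟩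
  have hh : HasFDerivAt h ((f (h x) / r) • innerSL ℝ (x - x₀)) x := by
    have h1 := hgrad.hasFDerivAt
    have htd : (InnerProductSpace.toDual ℝ E) ((f (h x) / r) • (x - x₀))
        = (f (h x) / r) • innerSL ℝ (x - x₀) := by
      ext w
      simp [InnerProductSpace.toDual_apply_apply, inner_smul_left]
    rwa [htd] at h1
  have hfd1 : DifferentiableAt ℝ f (h x) := (hf.contDiffAt hInhds).differentiableAt one_ne_zero
  have hu : HasFDerivAt (fun y => f (h y))
      ((deriv f (h x)) • ((f (h x) / r) • innerSL ℝ (x - x₀))) x :=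
    hfd1.hasDerivAt.comp_hasFDerivAt x hh
  have hn := hasFDerivAt_norm_sub' x₀ x hx0
  have hninv : HasFDerivAt (fun y => (‖y - x₀‖)⁻¹)
      ((-(r ^ 2)⁻¹) • (r⁻¹ • innerSL ℝ (x - x₀))) x := by
    have hinv : HasDerivAt Inv.inv (-(r ^ 2)⁻¹) (‖x - x₀‖) := hasDerivAt_inv hrpos.ne'
    exact hinv.comp_hasFDerivAt x hn
  have ha := hu.mul hninv
  have hid : HasFDerivAt (fun y : E => y - x₀) (ContinuousLinearMap.id ℝ E) x :=
    (hasFDerivAt_id x).sub_const x₀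
  have hG := ha.smul hid
  have hfd : fderiv ℝ (gradient h) x
      = (f (h x) * r⁻¹) • ContinuousLinearMap.id ℝ E
        + (f (h x) • ((-(r ^ 2)⁻¹) • (r⁻¹ • innerSL ℝ (x - x₀)))
            + (‖x - x₀‖)⁻¹ • ((deriv f (h x)) • ((f (h x) / r) • innerSL ℝ (x - x₀)))).smulRight
          (x - x₀) := by
    rw [hEvt.fderiv_eq]
    exact hG.fderiv
  rw [hfd]
  simp only [ContinuousLinearMap.add_apply, ContinuousLinearMap.smul_apply,
    ContinuousLinearMap.smulRight_apply, ContinuousLinearMap.coe_id', id_eq,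
    innerSL_apply_apply, smul_eq_mul, hvx]
  simp [div_eq_mul_inv]
end

section
/- Let c > 0 and let h : ℝ → ℝ be differentiable on all of ℝ with h′(t) ≥ c·h(t)² for every t ∈ ℝ. Then h is identically zero. (Paper: the Riccati comparison step in the proof of Theorem 'teoLcerrada': from 0 ≤ ξ(H) − H²/(n−2) along complete integral curves of the lightlike geodesic vector field ξ one concludes that the lightlike mean curvature H vanishes, hence L is totally geodesic.) -/
/-- Auxiliary: a global solution of `h' ≥ c h²` with `c > 0` is never positive. -/
lemma riccati_aux
    (c : ℝ) (hc : 0 < c)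
    (h : ℝ → ℝ) (hdiff : Differentiable ℝ h)
    (hineq : ∀ t : ℝ, c * (h t) ^ 2 ≤ deriv h t) :
    ∀ t : ℝ, h t ≤ 0 := by
  intro t₀
  by_contra hpos
  push_neg at hpos
  set a := h t₀ with ha_def
  have ha : 0 < a := hpos
  have hmono : Monotone h := by
    apply monotone_of_deriv_nonneg hdiff
    intro t
    exact le_trans (by positivity) (hineq t)
  have hposIci : ∀ t, t₀ ≤ t → 0 < h t := fun t ht => lt_of_lt_of_le ha (hmono ht)
  set T := t₀ + (c * a)⁻¹ + 1 with hT_def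
  have htT : t₀ < T := by
    have h0 : 0 < (c * a)⁻¹ := by positivity
    show t₀ < t₀ + (c * a)⁻¹ + 1
    linarith
  set φ : ℝ → ℝ := fun t => -(h t)⁻¹ - c * t with hφ_def
  have hφderiv : ∀ x, t₀ ≤ x → HasDerivAt φ (deriv h x / (h x) ^ 2 - c) x := by
    intro x hx
    have hx0 : h x ≠ 0 := ne_of_gt (hposIci x hx)
    have h1 : HasDerivAt (fun t => (h t)⁻¹) (-(deriv h x) / (h x) ^ 2) x :=
      ((hdiff x).hasDerivAt).inv hx0
    have h2 : HasDerivAt (fun t => -(h t)⁻¹) (deriv h x / (h x) ^ 2) x := by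
      have := h1.fun_neg
      simpa [neg_div] using this
    have h3 : HasDerivAt (fun t : ℝ => c * t) c x := by
      simpa using (hasDerivAt_id x).const_mul c
    simpa using h2.fun_sub h3
  have hφmono : MonotoneOn φ (Set.Icc t₀ T) := by
    apply monotoneOn_of_deriv_nonneg (convex_Icc t₀ T)
    · apply ContinuousOn.sub
      · apply ContinuousOn.neg
        apply ContinuousOn.inv₀ hdiff.continuous.continuousOn
        intro x hx
        exact ne_of_gt (hposIci x hx.1)
      · exact (continuous_const.mul continuous_id).continuousOn
    · intro x hx
      rw [interior_Icc] at hx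
      exact ((hφderiv x hx.1.le).differentiableAt).differentiableWithinAt
    · intro x hx
      rw [interior_Icc] at hx
      rw [(hφderiv x hx.1.le).deriv]
      have hx0 : 0 < h x := hposIci x hx.1.le
      have hx2 : (0:ℝ) < (h x) ^ 2 := by positivity
      have : c ≤ deriv h x / (h x) ^ 2 := by
        rw [le_div_iff₀ hx2]
        linarith [hineq x]
      linarith
  have key : φ t₀ ≤ φ T :=
    hφmono (Set.left_mem_Icc.mpr htT.le) (Set.right_mem_Icc.mpr htT.le) htT.le
  have hhT : 0 < h T := hposIci T htT.le
  have h1 : c * (T - t₀) ≤ (h t₀)⁻¹ - (h T)⁻¹ := by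
    simp only [hφ_def] at key
    linarith
  have h2 : 0 < (h T)⁻¹ := by positivity
  have h3 : (h t₀)⁻¹ = a⁻¹ := by rw [ha_def]
  have h4 : c * (T - t₀) = a⁻¹ + c := by
    rw [hT_def]
    field_simp
    ring
  rw [h4, h3] at h1
  linarith

/-- The Riccati comparison step in the proof of Theorem `teoLcerrada` of the
paper: a function `h : ℝ → ℝ`, differentiable on all of `ℝ` and satisfying
`h′(t) ≥ c·h(t)²` everywhere for some `c > 0`, must vanish identically. -/
theorem riccati_global_implies_zero
    (c : ℝ) (hc : 0 < c)
    (h : ℝ → ℝ) (hdiff : Differentiable ℝ h)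
    (hineq : ∀ t : ℝ, c * (h t) ^ 2 ≤ deriv h t) :
    ∀ t : ℝ, h t = 0 := by
  have hle : ∀ t, h t ≤ 0 := riccati_aux c hc h hdiff hineq
  set g : ℝ → ℝ := fun t => -h (-t) with hg_def
  have hgderiv : ∀ t, HasDerivAt g (deriv h (-t)) t := by
    intro t
    have h1 : HasDerivAt h (deriv h (-t)) (-t) := (hdiff (-t)).hasDerivAt
    have h2 : HasDerivAt (fun x : ℝ => -x) (-1) t := by
      simpa using (hasDerivAt_id t).fun_neg
    have h3 := h1.comp t h2
    have h4 := h3.fun_neg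
    simpa [Function.comp] using h4
  have hgdiff : Differentiable ℝ g := fun t => (hgderiv t).differentiableAt
  have hgineq : ∀ t, c * (g t) ^ 2 ≤ deriv g t := by
    intro t
    rw [(hgderiv t).deriv]
    have : (g t) ^ 2 = (h (-t)) ^ 2 := by simp [hg_def]
    rw [this]
    exact hineq (-t)
  have hge : ∀ t, g t ≤ 0 := riccati_aux c hc g hgdiff hgineq
  intro t
  have h1 := hle t
  have h2 := hge (-t)
  simp only [hg_def, neg_neg] at h2
  linarith
end

section
/- Let F be a real inner product space and on V = F × ℝ × ℝ × ℝ define the symmetric bilinear form q((z,a,b,c),(z′,a′,b′,c′)) = ⟨z,z′⟩ + a·a′ − b·b′ − c·c′ (the metric of ℝ₂^{n+1}). For s ∈ ℝ and z ∈ F set p(s,z) = ((e^s/cosh s)·z, tanh s − e^s‖z‖²/(2 cosh s), 1 + e^s‖z‖²/(2 cosh s), tanh s) and q₀ = (0, −1, 1, −1). Then q(p(s,z), p(s,z)) = −1 and q(p(s,z) − q₀, p(s,z) − q₀) = 0 for all s and z. (Paper: the third case in the proof of Theorem 'Teor1': the totally umbilic lightlike hypersurface of ℍⁿ₁ corresponding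 to the decomposition ℝ ×_{e^s} ℝ^{n−2} of the fibre lies on the quadric ℍⁿ₁ = {x : q(x,x) = −1} and is contained in the lightcone of the point q₀ = (0,…,0,−1,1,−1).) -/
open Real

/-- The third case in the proof of Theorem `Teor1` of the paper: with the index-2
form `q((z,a,b,c),(z',a',b',c')) = ⟨z,z'⟩ + aa' − bb' − cc'` on `F × ℝ × ℝ × ℝ`,
the points `p(s,z)` of the totally umbilic lightlike hypersurface coming from the
decomposition `ℝ ×_{e^s} ℝ^{n-2}` of the fibre lie on anti-de Sitter space
(`q(p,p) = −1`) and on the lightcone of `q₀ = (0,−1,1,−1)`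
(`q(p − q₀, p − q₀) = 0`). -/
theorem adS_umbilic_hypersurface_in_lightcone_flat_case
    {F : Type*} [NormedAddCommGroup F] [InnerProductSpace ℝ F]
    (q : (F × ℝ × ℝ × ℝ) → (F × ℝ × ℝ × ℝ) → ℝ)
    (hq : ∀ x y : F × ℝ × ℝ × ℝ,
      q x y = (inner ℝ x.1 y.1 : ℝ) + x.2.1 * y.2.1 - x.2.2.1 * y.2.2.1
        - x.2.2.2 * y.2.2.2)
    (p : ℝ → F → F × ℝ × ℝ × ℝ)
    (hp : ∀ s z, p s z = ((exp s / cosh s) • z,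
      tanh s - exp s * ‖z‖ ^ 2 / (2 * cosh s),
      1 + exp s * ‖z‖ ^ 2 / (2 * cosh s),
      tanh s))
    (q₀ : F × ℝ × ℝ × ℝ) (hq₀ : q₀ = (0, -1, 1, -1)) :
    ∀ (s : ℝ) (z : F),
      q (p s z) (p s z) = -1 ∧ q (p s z - q₀) (p s z - q₀) = 0 := by
  intro s z
  have hc : cosh s ≠ 0 := (cosh_pos s).ne'
  have ht : tanh s = sinh s / cosh s := tanh_eq_sinh_div_cosh s
  have he : exp s = cosh s + sinh s := by
    rw [cosh_eq, sinh_eq]; ring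
  have hcs : cosh s ^ 2 - sinh s ^ 2 = 1 := cosh_sq_sub_sinh_sq s
  have hin : (inner ℝ z z : ℝ) = ‖z‖ ^ 2 := real_inner_self_eq_norm_sq z
  simp only [hq, hp, hq₀, Prod.fst_sub, Prod.snd_sub, Prod.mk_sub_mk, sub_zero,
    real_inner_smul_left, real_inner_smul_right, hin, ht, he]
  constructor <;> · field_simp; ring
end

section
/- Let n ≥ 3 and on V = ℝ × (ℝ × ℝ^{n−2}) × ℝ define the symmetric bilinear form q((a,z,c),(a′,z′,c′)) = a·a′ + m₁(z,z′) − c·c′, where m₁((u₀,u),(v₀,v)) = −u₀·v₀ + ⟨u,v⟩ is the Minkowski form on ℝ × ℝ^{n−2} (so q has index 2, the metric of ℝ₂^{n+1}). Fix θ ≠ 0 and let z ∈ ℝ × ℝ^{n−2} satisfy m₁(z,z) = −cosh²θ. For s ∈ ℝ set p(s,z) = (sinh θ + cosh θ · tanh s, (1 + tanh θ · tanh s)·z, tanh s) and c₀ = (−1/sinh θ, 0, −1/tanh θ). Then q(p(s,z), p(s,z)) = −1 and q(p(s,z) − c₀, p(s,z) − c₀) = 0. (Paper: the second case in the proof of Theorem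 'Teor1': the totally umbilic lightlike hypersurface of ℍⁿ₁ corresponding to the decomposition ℝ ×_{cosh(s+θ)/cosh θ} ℍ^{n−2}(cosh θ) of the fibre lies on the quadric ℍⁿ₁ and is contained in the lightcone of the point (−1/sinh θ, 0, …, 0, −1/tanh θ).) -/
open Real

/-- The second case in the proof of Theorem `Teor1` of the paper: on
`V = ℝ × (ℝ × ℝ^{n-2}) × ℝ` with the index-2 form
`q((a,z,c),(a',z',c')) = aa' + m₁(z,z') − cc'`, where `m₁` is the Minkowski form
of the middle factor, the points `p(s)` of the totally umbilic lightlike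
hypersurface coming from the decomposition `ℝ ×_{cosh(s+θ)/cosh θ} ℍ^{n-2}(cosh θ)`
of the fibre (with `z` on the hyperbolic space `m₁(z,z) = −cosh²θ`) lie on
anti-de Sitter space (`q(p,p) = −1`) and on the lightcone of
`c₀ = (−1/sinh θ, 0, −1/tanh θ)` (`q(p − c₀, p − c₀) = 0`). -/
theorem adS_umbilic_hypersurface_in_lightcone_hyperbolic_case
    (n : ℕ) (hn : 3 ≤ n)
    (m₁ : (ℝ × EuclideanSpace ℝ (Fin (n - 2))) →
          (ℝ × EuclideanSpace ℝ (Fin (n - 2))) → ℝ)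
    (hm₁ : ∀ x y, m₁ x y = -(x.1 * y.1) + (inner ℝ x.2 y.2 : ℝ))
    (q : (ℝ × (ℝ × EuclideanSpace ℝ (Fin (n - 2))) × ℝ) →
         (ℝ × (ℝ × EuclideanSpace ℝ (Fin (n - 2))) × ℝ) → ℝ)
    (hq : ∀ x y, q x y = x.1 * y.1 + m₁ x.2.1 y.2.1 - x.2.2 * y.2.2)
    (θ : ℝ) (hθ : θ ≠ 0)
    (z : ℝ × EuclideanSpace ℝ (Fin (n - 2))) (hz : m₁ z z = -(cosh θ) ^ 2)
    (p : ℝ → ℝ × (ℝ × EuclideanSpace ℝ (Fin (n - 2))) × ℝ)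
    (hp : ∀ s, p s = (sinh θ + cosh θ * tanh s,
      (1 + tanh θ * tanh s) • z, tanh s))
    (c₀ : ℝ × (ℝ × EuclideanSpace ℝ (Fin (n - 2))) × ℝ)
    (hc₀ : c₀ = (-1 / sinh θ, 0, -1 / tanh θ)) :
    ∀ s : ℝ, q (p s) (p s) = -1 ∧ q (p s - c₀) (p s - c₀) = 0 := by
  intro s
  have hcosh : Real.cosh θ ≠ 0 := (Real.cosh_pos θ).ne'
  have hsinh : Real.sinh θ ≠ 0 := fun h => hθ (Real.sinh_eq_zero.mp h)
  have key : Real.cosh θ ^ 2 - Real.sinh θ ^ 2 = 1 := Real.cosh_sq_sub_sinh_sq θ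
  have hinner : (inner ℝ z.2 z.2 : ℝ) = z.1 * z.1 - Real.cosh θ ^ 2 := by
    have h := hm₁ z z
    rw [hz] at h
    linarith
  have htanh : Real.tanh θ = Real.sinh θ / Real.cosh θ := Real.tanh_eq_sinh_div_cosh θ
  constructor
  · rw [hq, hp, hm₁]
    simp only [Prod.smul_fst, Prod.smul_snd, smul_eq_mul, real_inner_smul_left,
      real_inner_smul_right, hinner, htanh]
    field_simp
    linear_combination (Real.cosh θ ^ 4 * (Real.tanh s ^ 2 - 1) +
      Real.cosh θ ^ 2 * (1 - Real.tanh s ^ 2) * (Real.cosh θ ^ 2 - 1)) * key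
  · rw [hq, hp, hc₀, hm₁]
    simp only [Prod.fst_sub, Prod.snd_sub, Prod.smul_fst, Prod.smul_snd, smul_eq_mul,
      Prod.fst_zero, Prod.snd_zero, sub_zero, real_inner_smul_left,
      real_inner_smul_right, hinner, htanh]
    field_simp
    linear_combination (-(Real.sinh θ ^ 2 * Real.cosh θ ^ 4) *
      (1 + Real.sinh θ ^ 2 * (1 - Real.tanh s ^ 2)) +
      Real.cosh θ ^ 2 * (Real.cosh θ ^ 2 * Real.sinh θ ^ 2 *
        (1 + Real.sinh θ ^ 2 - Real.sinh θ ^ 2 * Real.tanh s ^ 2) -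
        1 - Real.sinh θ ^ 2 + Real.sinh θ ^ 2 * Real.tanh s ^ 2)) * key
end
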